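/- Let G be a profinite group whose set of coprime commutators is contained in a union of countably many procyclic subgroups. Suppose G = PA, where P is a closed normal pro-p subgroup and A is a closed pronilpotent pro-p' subgroup. Then the index [A : C_A(P)] of the centralizer of P in A is finite. -/

import Mathlib

/-!  Basic notions for profinite groups.

A profinite group is modelled as a compact Hausdorff totally disconnected
topological group, via the instance assumptions
`[Group G] [TopologicalSpace G] [IsTopologicalGroup G] [CompactSpace G]
[T2Space G] [TotallyDisconnectedSpace G]`. -/

/-- The set of primes dividing the order of some finite continuous quotient of `K`:
`p ∈ primesOf K` iff `p` is prime and divides the (finite) index of some open normal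
subgroup of `K`. -/
def primesOf (K : Type*) [Group K] [TopologicalSpace K] : Set ℕ :=
  {p | p.Prime ∧ ∃ N : Subgroup K, N.Normal ∧ IsOpen (N : Set K) ∧ N.index ≠ 0 ∧ p ∣ N.index}

/-- The closed subgroup topologically generated by `x`. -/
def closedGen {G : Type*} [Group G] [TopologicalSpace G] [IsTopologicalGroup G] (x : G) :
    Subgroup G :=
  (Subgroup.zpowers x).topologicalClosure

/-- `x` and `y` have coprime orders: `π(⟨x⟩) ∩ π(⟨y⟩) = ∅`. -/
def CoprimeOrders {G : Type*} [Group G] [TopologicalSpace G] [IsTopologicalGroup G] (x y : G) :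
    Prop :=
  primesOf ↥(closedGen x) ∩ primesOf ↥(closedGen y) = ∅

open scoped commutatorElement

/-- `g` is a coprime commutator: `g = [x,y]` with `x, y` of coprime orders. -/
def IsCoprimeCommutator {G : Type*} [Group G] [TopologicalSpace G] [IsTopologicalGroup G]
    (g : G) : Prop :=
  ∃ x y : G, CoprimeOrders x y ∧ g = ⁅x, y⁆

/-- A topological group is procyclic if it is topologically generated by a single element. -/
def IsProcyclic (K : Type*) [Group K] [TopologicalSpace K] : Prop :=
  ∃ g : K, closure ((Subgroup.zpowers g : Subgroup K) : Set K) = Set.univ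

/-- A subgroup of a topological group is procyclic if it is topologically generated by a
single element. -/
def IsProcyclicSubgroup {G : Type*} [Group G] [TopologicalSpace G] (H : Subgroup G) : Prop :=
  ∃ g ∈ H, closure ((Subgroup.zpowers g : Subgroup G) : Set G) = (H : Set G)

/-- The pronilpotent residual `γ∞(G)`: the intersection of the terms of the lower central
series of `G` (each term taken as the corresponding closed subgroup). -/
def pronilpotentResidual (G : Type*) [Group G] [TopologicalSpace G] [IsTopologicalGroup G] :
    Subgroup G :=
  ⨅ n : ℕ, (Subgroup.lowerCentralSeries (⊤ : Subgroup G) n).topologicalClosure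

/-- A profinite group is pronilpotent iff its pronilpotent residual is trivial. -/
def IsPronilpotent (K : Type*) [Group K] [TopologicalSpace K] [IsTopologicalGroup K] : Prop :=
  pronilpotentResidual K = ⊥

/-- The quotient `K ⧸ N` is procyclic. -/
def QuotientIsProcyclic {K : Type*} [Group K] [TopologicalSpace K] (N : Subgroup K)
    (hN : N.Normal) : Prop :=
  letI := hN
  IsProcyclic (K ⧸ N)

/-- `K` is finite-by-procyclic: it has a finite normal subgroup with procyclic quotient. -/
def FiniteByProcyclic (K : Type*) [Group K] [TopologicalSpace K] : Prop :=
  ∃ (N : Subgroup K) (hN : N.Normal), Finite N ∧ QuotientIsProcyclic N hN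

/-- The quotient `K ⧸ N` is pronilpotent. -/
def QuotientIsPronilpotent {K : Type*} [Group K] [TopologicalSpace K] [IsTopologicalGroup K]
    (N : Subgroup K) (hN : N.Normal) : Prop :=
  letI := hN
  IsPronilpotent (K ⧸ N)

/-- The closed subgroup `[S,T]` generated by the commutators `⁅s,t⁆`, `s ∈ S`, `t ∈ T`. -/
def commClosure {G : Type*} [Group G] [TopologicalSpace G] [IsTopologicalGroup G]
    (S T : Set G) : Subgroup G :=
  (Subgroup.closure {z : G | ∃ s ∈ S, ∃ t ∈ T, z = ⁅s, t⁆}).topologicalClosure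


namespace CFIC


variable {G : Type*} [Group G] [TopologicalSpace G] [IsTopologicalGroup G]

theorem exists_openNormal [CompactSpace G] [T2Space G] [TotallyDisconnectedSpace G]
    {U : Set G} (hU : U ∈ nhds (1 : G)) :
    ∃ N : Subgroup G, N.Normal ∧ IsOpen (N : Set G) ∧ (N : Set G) ⊆ U := by
  obtain ⟨V, ⟨h1V, hVclopen⟩, hVU⟩ := (nhds_basis_clopen (1 : G)).mem_iff.mp hU
  obtain ⟨H, hH⟩ :=
    IsTopologicalGroup.exist_openNormalSubgroup_sub_clopen_nhds_of_one hVclopen h1V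
  exact ⟨H.toSubgroup, H.isNormal', H.toOpenSubgroup.isOpen, hH.trans hVU⟩

theorem eq_one_of_forall_mem [CompactSpace G] [T2Space G] [TotallyDisconnectedSpace G]
    {x : G} (h : ∀ N : Subgroup G, N.Normal → IsOpen (N : Set G) → x ∈ N) : x = 1 := by
  by_contra hx
  have hU : ({x}ᶜ : Set G) ∈ nhds (1 : G) :=
    (isOpen_compl_singleton).mem_nhds (by simpa using (Ne.symm hx))
  obtain ⟨N, hNn, hNo, hNU⟩ := exists_openNormal hU
  exact hNU (h N hNn hNo) rfl

theorem index_ne_zero_of_isOpen [CompactSpace G] {H : Subgroup G} (h : IsOpen (H : Set G)) :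
    H.index ≠ 0 :=
  haveI : Finite (G ⧸ H) := H.quotient_finite_of_isOpen h
  Subgroup.index_ne_zero_of_finite

theorem pow_index_helper [CompactSpace G] (L : Subgroup G) (hL : IsClosed (L : Set G))
    (N : Subgroup G) (hNn : N.Normal) (hNo : IsOpen (N : Set G)) :
    (N.subgroupOf L).index ≠ 0 ∧ (∀ x ∈ L, x ^ (N.subgroupOf L).index ∈ N) ∧
      (∀ q : ℕ, q.Prime → q ∣ (N.subgroupOf L).index → q ∈ primesOf ↥L) := by
  haveI : CompactSpace ↥L := isCompact_iff_compactSpace.mp hL.isCompact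
  haveI hsn : (N.subgroupOf L).Normal := hNn.comap L.subtype
  have hso : IsOpen ((N.subgroupOf L : Subgroup ↥L) : Set ↥L) := by
    rw [Subgroup.coe_subgroupOf]
    exact hNo.preimage continuous_subtype_val
  have hidx : (N.subgroupOf L).index ≠ 0 := index_ne_zero_of_isOpen hso
  refine ⟨hidx, ?_, ?_⟩
  · intro x hx
    have := (N.subgroupOf L).pow_index_mem (⟨x, hx⟩ : ↥L)
    rw [Subgroup.mem_subgroupOf] at this
    simpa using this
  · intro q hq hqdvd
    exact ⟨hq, N.subgroupOf L, hsn, hso, hidx, hqdvd⟩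

theorem primesOf_mono [CompactSpace G] [T2Space G] [TotallyDisconnectedSpace G]
    {H L : Subgroup G} (hHL : H ≤ L) (hL : IsClosed (L : Set G)) :
    primesOf ↥H ⊆ primesOf ↥L := by
  haveI : CompactSpace ↥L := isCompact_iff_compactSpace.mp hL.isCompact
  rintro q ⟨hq, N, hNn, hNo, hNidx, hNdvd⟩
  obtain ⟨O, hOopen, hON⟩ := isOpen_induced_iff.mp hNo
  have h1O : (1 : G) ∈ O := by
    have : ((1 : ↥H) : G) ∈ O := by
      rw [← Set.mem_preimage, hON]; exact N.one_mem
    simpa using this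
  have hUnhds : (Subtype.val ⁻¹' O : Set ↥L) ∈ nhds (1 : ↥L) :=
    (hOopen.preimage continuous_subtype_val).mem_nhds (by simpa using h1O)
  obtain ⟨M, hMn, hMo, hMsub⟩ := exists_openNormal hUnhds
  set ι : ↥H →* ↥L := Subgroup.inclusion hHL
  have hcomap : M.comap ι ≤ N := by
    intro x hx
    have h2 : (ι x : G) ∈ O := hMsub hx
    have hx' : (x : G) ∈ O := by simpa [ι, Subgroup.coe_inclusion] using h2
    have h3 : x ∈ (Subtype.val ⁻¹' O : Set ↥H) := hx'
    rw [hON] at h3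
    exact h3
  have h1 : N.index ∣ (M.comap ι).index := Subgroup.index_dvd_of_le hcomap
  have h2 : (M.comap ι).index ∣ M.index := by
    rw [Subgroup.index_comap]
    exact Subgroup.relIndex_dvd_index_of_normal M ι.range
  exact ⟨hq, M, hMn, hMo, index_ne_zero_of_isOpen hMo, hNdvd.trans (h1.trans h2)⟩

theorem centralize_step [CompactSpace G] [T2Space G] [TotallyDisconnectedSpace G]
    {p : ℕ} (hp : p.Prime)
    (P A : Subgroup G) (hPclosed : IsClosed (P : Set G)) (hAclosed : IsClosed (A : Set G))
    (hPp : primesOf ↥P ⊆ {p}) (hAp' : p ∉ primesOf ↥A)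
    {c : G} (hcA : c ∈ A) (Q W' : Subgroup G) (hW'P : W' ≤ P)
    (hcW' : ∀ n ∈ W', c * n = n * c)
    (hQ : ∀ x ∈ Q, ⁅x, c⁆ ∈ W') :
    ∀ x ∈ Q, c * x = x * c := by
  intro x hx
  set δ : G := x⁻¹ * c * x * c⁻¹ with hδdef
  have hδW : δ ∈ W' := by
    have h0 := hQ x⁻¹ (Q.inv_mem hx)
    simpa [commutatorElement_def, hδdef, mul_assoc] using h0
  have hrel0 : c * x = x * δ * c := by rw [hδdef]; group
  have hcδ : Commute c δ := hcW' δ hδW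
  have hrelm : ∀ m : ℕ, c ^ m * x = x * δ ^ m * c ^ m := by
    intro m
    induction m with
    | zero => simp
    | succ m ih =>
      have hcd : c * δ ^ m = δ ^ m * c := (hcδ.pow_right m).eq
      calc c ^ (m + 1) * x = c * (c ^ m * x) := by rw [pow_succ']; group
        _ = c * (x * δ ^ m * c ^ m) := by rw [ih]
        _ = (c * x) * δ ^ m * c ^ m := by group
        _ = x * δ * (c * δ ^ m) * c ^ m := by rw [hrel0]; group
        _ = x * δ * (δ ^ m * c) * c ^ m := by rw [hcd]
        _ = x * δ ^ (m + 1) * c ^ (m + 1) := by rw [pow_succ', pow_succ']; group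
  have hδ1 : δ = 1 := by
    apply eq_one_of_forall_mem
    intro N hNn hNo
    obtain ⟨hsne, hpowA, hsprimes⟩ := pow_index_helper A hAclosed N hNn hNo
    obtain ⟨htne, hpowP, htprimes⟩ := pow_index_helper P hPclosed N hNn hNo
    set s := (N.subgroupOf A).index with hs
    set t := (N.subgroupOf P).index with ht
    have hps : ¬ p ∣ s := fun h => hAp' (hsprimes p hp h)
    have hδP : δ ∈ P := hW'P hδW
    have hδt : δ ^ t ∈ N := hpowP δ hδP
    have hcs : c ^ s ∈ N := hpowA c hcA
    rcases eq_or_lt_of_le (Nat.one_le_iff_ne_zero.mpr htne) with h1t | h1t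
    · have : δ ^ t = δ := by rw [← h1t, pow_one]
      rwa [this] at hδt
    · -- t > 1 : find j with s * j % t = 1
      have hcop : Nat.Coprime s t := by
        rw [Nat.coprime_iff_gcd_eq_one]
        by_contra hg
        have hgne : Nat.gcd s t ≠ 0 := fun h => htne (Nat.eq_zero_of_gcd_eq_zero_right h)
        set g := Nat.gcd s t
        have hqprime : (Nat.minFac g).Prime := Nat.minFac_prime hg
        have hqs : Nat.minFac g ∣ s := (Nat.minFac_dvd g).trans (Nat.gcd_dvd_left s t)
        have hqt : Nat.minFac g ∣ t := (Nat.minFac_dvd g).trans (Nat.gcd_dvd_right s t)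
        have : Nat.minFac g ∈ primesOf ↥P := htprimes _ hqprime hqt
        have hq_eq : Nat.minFac g = p := hPp this
        exact hps (hq_eq ▸ hqs)
      obtain ⟨j, -, hj⟩ := Nat.exists_mul_mod_eq_one_of_coprime hcop h1t
      set m := s * j with hm
      have hcm : c ^ m ∈ N := by rw [hm, pow_mul]; exact N.pow_mem hcs j
      have hδm : δ ^ m ∈ N := by
        have h2 : x * δ ^ m = c ^ m * x * (c ^ m)⁻¹ := by
          rw [eq_mul_inv_iff_mul_eq]
          exact (hrelm m).symm
        have h3 : δ ^ m = x⁻¹ * (c ^ m * x * (c ^ m)⁻¹) := by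
          rw [← h2, inv_mul_cancel_left]
        rw [h3]
        have h4 : x⁻¹ * c ^ m * x ∈ N := by
          have := hNn.conj_mem _ hcm x⁻¹
          simpa using this
        have := N.mul_mem h4 (N.inv_mem hcm)
        simpa [mul_assoc] using this
      -- m % t = 1, so δ ∈ N
      have hmmod : m = t * (m / t) + 1 := by
        conv_lhs => rw [← Nat.div_add_mod m t]
        rw [hj]
      have h5 : δ ^ m = (δ ^ t) ^ (m / t) * δ := by
        conv_lhs => rw [hmmod]
        rw [pow_add, pow_mul, pow_one]
      have h6 : δ = ((δ ^ t) ^ (m / t))⁻¹ * δ ^ m := by rw [h5]; group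
      rw [h6]
      exact N.mul_mem (N.inv_mem (N.pow_mem hδt _)) hδm
  rw [hrel0, hδ1, mul_one]



universe u
variable {G' : Type*}

theorem fin_lemma {p s : ℕ} (hp : p.Prime) (hs : ¬ p ∣ s) :
    ∀ (n : ℕ) (Y : Type u) [CommGroup Y] (σ : Y →* Y),
      Nat.card Y ∣ p ^ n → (∀ y, (⇑σ)^[s] y = y) → (∀ y, ∃ z, σ y = y * z ^ p) →
      ∀ y, σ y = y := by
  intro n
  induction n with
  | zero =>
    intro Y _ σ hcard _ _ y
    have h1 : Nat.card Y = 1 := Nat.dvd_one.mp (by simpa using hcard)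
    haveI : Subsingleton Y := (Nat.card_eq_one_iff_unique.mp h1).1
    exact Subsingleton.elim _ _
  | succ n IH =>
    intro Y _ σ hcard hσs hσ1
    have hpow_ne : (p : ℕ) ^ (n + 1) ≠ 0 := pow_ne_zero _ hp.pos.ne'
    have hcardne : Nat.card Y ≠ 0 := fun h => hpow_ne (by rw [h] at hcard; exact (zero_dvd_iff.mp hcard))
    haveI : Finite Y := Nat.finite_of_card_ne_zero hcardne
    by_cases h1 : Nat.card Y = 1
    · haveI : Subsingleton Y := (Nat.card_eq_one_iff_unique.mp h1).1
      intro y; exact Subsingleton.elim _ _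
    -- p divides the cardinality
    have hpdvd : p ∣ Nat.card Y := by
      obtain ⟨j, hjle, hj⟩ := (Nat.dvd_prime_pow hp).mp hcard
      rcases Nat.eq_zero_or_pos j with rfl | hjpos
      · exact absurd (by simpa using hj) h1
      · rw [hj]; exact dvd_pow_self p hjpos.ne'
    -- the subgroup of p-th powers
    set f : Y →* Y := powMonoidHom p with hf
    set T : Subgroup Y := f.range with hT
    -- Cauchy: an element of order p lies in the kernel of f
    haveI : Fintype Y := Fintype.ofFinite Y
    haveI : Fact p.Prime := ⟨hp⟩
    obtain ⟨y0, hy0⟩ := exists_prime_orderOf_dvd_card (G := Y) p (by rwa [← Nat.card_eq_fintype_card])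
    have hy0ker : y0 ∈ f.ker := by
      rw [MonoidHom.mem_ker]
      show y0 ^ p = 1
      rw [← hy0]; exact pow_orderOf_eq_one y0
    have hpker : p ∣ Nat.card f.ker := by
      have hle : Subgroup.zpowers y0 ≤ f.ker := Subgroup.zpowers_le.mpr hy0ker
      have := Subgroup.card_dvd_of_le hle
      rwa [Nat.card_zpowers, hy0] at this
    -- card T * card ker = card Y
    have hcardT : Nat.card ↥T * Nat.card f.ker = Nat.card Y := by
      have h2 : Nat.card (Y ⧸ f.ker) = Nat.card ↥T :=
        Nat.card_congr (QuotientGroup.quotientKerEquivRange f).toEquiv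
      rw [← h2, ← Subgroup.card_eq_card_quotient_mul_card_subgroup]
    have hTcard : Nat.card ↥T ∣ p ^ n := by
      have : p * Nat.card ↥T ∣ Nat.card f.ker * Nat.card ↥T :=
        mul_dvd_mul_right hpker _
      rw [mul_comm (Nat.card f.ker), hcardT] at this
      have h3 : p * Nat.card ↥T ∣ p * p ^ n := by
        rw [← pow_succ']
        exact this.trans hcard
      exact (mul_dvd_mul_iff_left hp.pos.ne').mp h3
    -- restrict σ to T
    have hmapsto : ∀ t : ↥T, σ.domRestrict T t ∈ T := by
      rintro ⟨y, hy⟩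
      obtain ⟨z, hz⟩ := hy
      refine ⟨σ z, ?_⟩
      show (σ z) ^ p = _
      have : (z : Y) ^ p = y := hz
      simp [MonoidHom.restrict_apply, ← this, ← map_pow]
    set σ' : ↥T →* ↥T := (σ.domRestrict T).codRestrict T hmapsto with hσ'
    have hσ'coe : ∀ t : ↥T, ((σ' t : ↥T) : Y) = σ (t : Y) := fun t => rfl
    have hiter : ∀ (m : ℕ) (t : ↥T), ((⇑σ')^[m] t : Y) = (⇑σ)^[m] (t : Y) := by
      intro m
      induction m with
      | zero => intro t; rfl
      | succ m ih =>
        intro t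
        rw [Function.iterate_succ_apply, Function.iterate_succ_apply, ← hσ'coe, ih]
    have hσ's : ∀ t : ↥T, (⇑σ')^[s] t = t := by
      intro t
      apply Subtype.ext
      rw [hiter, hσs]
    have hσ'1 : ∀ t : ↥T, ∃ z : ↥T, σ' t = t * z ^ p := by
      rintro ⟨y, hy⟩
      obtain ⟨w, hw⟩ := hy
      obtain ⟨z, hz⟩ := hσ1 w
      have hzp : (z : Y) ^ p ∈ T := ⟨z, rfl⟩
      refine ⟨⟨z ^ p, hzp⟩, ?_⟩
      apply Subtype.ext
      show σ y = y * (z ^ p) ^ p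
      have hw' : w ^ p = y := hw
      rw [← hw', map_pow, hz, mul_pow]
    have hid : ∀ t : ↥T, σ' t = t := IH ↥T σ' hTcard hσ's hσ'1
    -- conclude
    intro y
    obtain ⟨z, hz⟩ := hσ1 y
    set d : Y := z ^ p with hd
    have hdT : d ∈ T := ⟨z, rfl⟩
    have hσd : σ d = d := by
      have := hid ⟨d, hdT⟩
      have := congrArg (Subtype.val) this
      rwa [hσ'coe] at this
    have hrel : ∀ m : ℕ, (⇑σ)^[m] y = y * d ^ m := by
      intro m
      induction m with
      | zero => simp
      | succ m ih =>
        rw [Function.iterate_succ_apply', ih, map_mul, hz, map_pow, hσd, mul_assoc,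
          ← pow_succ']
    have hds : d ^ s = 1 := by
      have := hrel s
      rw [hσs y] at this
      have := this.symm
      rwa [mul_eq_left] at this
    have hd1 : d = 1 := by
      have h4 : orderOf d ∣ s := orderOf_dvd_of_pow_eq_one hds
      have h5 : orderOf d ∣ p ^ (n + 1) := (orderOf_dvd_natCard d).trans hcard
      have hcop : Nat.Coprime (p ^ (n + 1)) s := (hp.coprime_iff_not_dvd.mpr hs).pow_left _
      have : orderOf d ∣ Nat.gcd (p ^ (n + 1)) s := Nat.dvd_gcd h5 h4
      rw [hcop] at this
      exact orderOf_eq_one_iff.mp (Nat.dvd_one.mp this)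
    rw [hz, hd1, mul_one]



theorem index_zpowers_pow_dvd {X : Type*} [Group X] [Finite X] {g : X}
    (hg : ∀ x, x ∈ Subgroup.zpowers g) (p : ℕ) :
    (Subgroup.zpowers (g ^ p)).index ∣ p := by
  have ho : orderOf g = Nat.card X := orderOf_eq_card_of_forall_mem_zpowers hg
  set o := orderOf g with hodef
  set d := Nat.gcd o p with hd
  have hdvd : d ∣ o := Nat.gcd_dvd_left o p
  have hopos : 0 < o := orderOf_pos g
  have hcard : Nat.card (Subgroup.zpowers (g ^ p)) = o / d := by
    rw [Nat.card_zpowers, orderOf_pow]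
  have hmul := Subgroup.card_mul_index (Subgroup.zpowers (g ^ p))
  rw [hcard, ← ho] at hmul
  -- (o / d) * index = o = (o / d) * d
  have h2 : (o / d) * d = o := Nat.div_mul_cancel hdvd
  have hqpos : 0 < o / d := Nat.div_pos (Nat.le_of_dvd hopos hdvd) (Nat.pos_of_dvd_of_pos hdvd hopos)
  have h3 : (Subgroup.zpowers (g ^ p)).index = d := by
    apply Nat.eq_of_mul_eq_mul_left hqpos
    rw [hmul, h2]
  rw [h3]
  exact Nat.gcd_dvd_right o p



variable {G : Type*} [Group G] [TopologicalSpace G] [IsTopologicalGroup G]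

theorem isCyclic_quotient (Z W : Subgroup G) (hZ : IsProcyclicSubgroup Z) (hWZ : W ≤ Z)
    (N : Subgroup G) (hNn : N.Normal) (hNo : IsOpen (N : Set G)) :
    IsCyclic (↥W ⧸ N.subgroupOf W) := by
  haveI : (N.subgroupOf Z).Normal := hNn.comap Z.subtype
  haveI : (N.subgroupOf W).Normal := hNn.comap W.subtype
  obtain ⟨g, hgZ, hgen⟩ := hZ
  set g' : ↥Z := ⟨g, hgZ⟩ with hg'
  have himg : (Subtype.val '' ((Subgroup.zpowers g' : Subgroup ↥Z) : Set ↥Z)) =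
      ((Subgroup.zpowers g : Subgroup G) : Set G) := by
    ext x
    constructor
    · rintro ⟨z, ⟨k, rfl⟩, rfl⟩
      exact ⟨k, by simp [hg']⟩
    · rintro ⟨k, rfl⟩
      exact ⟨g' ^ k, ⟨k, rfl⟩, by simp [hg']⟩
  haveI hTcyc : IsCyclic (↥Z ⧸ N.subgroupOf Z) := by
    constructor
    refine ⟨QuotientGroup.mk g', ?_⟩
    intro x
    obtain ⟨y, rfl⟩ := QuotientGroup.mk'_surjective (N.subgroupOf Z) x
    set R : Subgroup ↥Z :=
      (Subgroup.zpowers ((QuotientGroup.mk' (N.subgroupOf Z)) g')).comap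
        (QuotientGroup.mk' (N.subgroupOf Z)) with hR
    have hNR : N.subgroupOf Z ≤ R := by
      intro z hz
      have h1 : (QuotientGroup.mk' (N.subgroupOf Z)) z = 1 := by
        rw [QuotientGroup.mk'_apply, QuotientGroup.eq_one_iff]
        exact hz
      rw [hR, Subgroup.mem_comap, h1]
      exact Subgroup.one_mem _
    have hRopen : IsOpen (R : Set ↥Z) := by
      apply Subgroup.isOpen_mono hNR
      rw [Subgroup.coe_subgroupOf]
      exact hNo.preimage continuous_subtype_val
    have hRclosed := Subgroup.isClosed_of_isOpen _ hRopen
    have hzsub : ((Subgroup.zpowers g' : Subgroup ↥Z) : Set ↥Z) ⊆ (R : Set ↥Z) := by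
      rintro z ⟨k, rfl⟩
      exact ⟨k, rfl⟩
    have hy : y ∈ closure ((Subgroup.zpowers g' : Subgroup ↥Z) : Set ↥Z) := by
      rw [closure_subtype, himg, hgen]
      exact y.2
    have hyR : y ∈ (R : Set ↥Z) := closure_minimal hzsub hRclosed hy
    exact hyR
  set ι : ↥W →* ↥Z := Subgroup.inclusion hWZ with hι
  set ψ : ↥W →* ↥Z ⧸ N.subgroupOf Z := (QuotientGroup.mk' (N.subgroupOf Z)).comp ι with hψ
  have hker : ψ.ker = N.subgroupOf W := by
    ext x
    rw [MonoidHom.mem_ker, hψ, MonoidHom.comp_apply, QuotientGroup.mk'_apply,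
      QuotientGroup.eq_one_iff, Subgroup.mem_subgroupOf, Subgroup.mem_subgroupOf]
    rfl
  have e1 : (↥W ⧸ N.subgroupOf W) ≃* (↥W ⧸ ψ.ker) :=
    QuotientGroup.quotientMulEquivOfEq hker.symm
  have e2 : (↥W ⧸ ψ.ker) ≃* ψ.range := QuotientGroup.quotientKerEquivRange ψ
  haveI : IsCyclic ψ.range := inferInstance
  exact isCyclic_of_surjective (e1.trans e2).symm (e1.trans e2).symm.surjective




variable {G : Type*} [Group G] [TopologicalSpace G] [IsTopologicalGroup G]


theorem nat_dvd_pow_of_primes {p : ℕ} (hp : p.Prime) :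
    ∀ t : ℕ, t ≠ 0 → (∀ q : ℕ, q.Prime → q ∣ t → q = p) → t ∣ p ^ t := by
  intro t
  induction t using Nat.strong_induction_on with
  | _ t IH =>
    intro ht hq
    rcases eq_or_ne t 1 with rfl | ht1
    · exact one_dvd _
    · have hmin : (Nat.minFac t).Prime := Nat.minFac_prime ht1
      have hminp : Nat.minFac t = p := hq _ hmin (Nat.minFac_dvd t)
      have hpd : p ∣ t := hminp ▸ Nat.minFac_dvd t
      set t' := t / p with ht'
      have htt : t = p * t' := (Nat.mul_div_cancel' hpd).symm
      have ht'0 : t' ≠ 0 := by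
        intro h; rw [h, mul_zero] at htt; exact ht htt
      have ht'lt : t' < t := Nat.div_lt_self (Nat.pos_of_ne_zero ht) hp.one_lt
      have hq' : ∀ q, q.Prime → q ∣ t' → q = p := fun q hq1 hq2 =>
        hq q hq1 (hq2.trans ⟨p, by rw [htt]; ring⟩)
      have IH' := IH t' ht'lt ht'0 hq'
      have h2 : t ∣ p ^ (t' + 1) := by
        rw [htt, pow_succ']
        exact mul_dvd_mul_left p IH'
      exact h2.trans (pow_dvd_pow p (by omega))

theorem procyclic_comm [T2Space G] {Z : Subgroup G} (hZ : IsProcyclicSubgroup Z) :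
    ∀ x ∈ Z, ∀ y ∈ Z, x * y = y * x := by
  obtain ⟨g, hgZ, hgen⟩ := hZ
  intro x hx y hy
  have hclosed : IsClosed {q : G × G | q.1 * q.2 = q.2 * q.1} :=
    isClosed_eq (continuous_fst.mul continuous_snd) (continuous_snd.mul continuous_fst)
  have hsub : ((Subgroup.zpowers g : Subgroup G) : Set G) ×ˢ
      ((Subgroup.zpowers g : Subgroup G) : Set G) ⊆ {q : G × G | q.1 * q.2 = q.2 * q.1} := by
    rintro ⟨a, b⟩ ⟨ha, hb⟩
    obtain ⟨i, rfl⟩ := Subgroup.mem_zpowers_iff.mp ha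
    obtain ⟨j, rfl⟩ := Subgroup.mem_zpowers_iff.mp hb
    exact ((Commute.refl g).zpow_zpow i j).eq
  have hmem : (x, y) ∈ closure (((Subgroup.zpowers g : Subgroup G) : Set G) ×ˢ
      ((Subgroup.zpowers g : Subgroup G) : Set G)) := by
    rw [closure_prod_eq, hgen]
    exact ⟨hx, hy⟩
  exact closure_minimal hsub hclosed hmem

theorem mem_sup_of_commute {H : Type*} [Group H] {S T : Subgroup H}
    (hc : ∀ s ∈ S, ∀ t ∈ T, s * t = t * s) {x : H} (hx : x ∈ S ⊔ T) :
    ∃ s ∈ S, ∃ t ∈ T, x = s * t := by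
  let K : Subgroup H :=
    { carrier := {x | ∃ s ∈ S, ∃ t ∈ T, x = s * t}
      one_mem' := ⟨1, S.one_mem, 1, T.one_mem, by simp⟩
      mul_mem' := by
        rintro a b ⟨s, hs, t, ht, rfl⟩ ⟨s', hs', t', ht', rfl⟩
        refine ⟨s * s', S.mul_mem hs hs', t * t', T.mul_mem ht ht', ?_⟩
        have h := hc s' hs' t ht
        calc s * t * (s' * t') = s * ((t * s') * t') := by group
          _ = s * ((s' * t) * t') := by rw [h]
          _ = s * s' * (t * t') := by group
      inv_mem' := by
        rintro a ⟨s, hs, t, ht, rfl⟩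
        refine ⟨s⁻¹, S.inv_mem hs, t⁻¹, T.inv_mem ht, ?_⟩
        have h : Commute s t := hc s hs t ht
        rw [mul_inv_rev, h.inv_inv.eq] }
  have hle : S ⊔ T ≤ K :=
    sup_le (fun s hs => ⟨s, hs, 1, T.one_mem, by simp⟩)
      (fun t ht => ⟨1, S.one_mem, t, ht, by simp⟩)
  exact hle hx

theorem powClosure_isOpen {H : Type*} [Group H] [TopologicalSpace H] [IsTopologicalGroup H]
    [CompactSpace H] [T2Space H] [TotallyDisconnectedSpace H]
    (hcomm : ∀ a b : H, a * b = b * a)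
    (hcyc : ∀ V : Subgroup H, ∀ hVn : V.Normal, IsOpen (V : Set H) →
      (letI := hVn; IsCyclic (H ⧸ V)))
    (exON : ∀ {U : Set H}, U ∈ nhds (1 : H) →
      ∃ N : Subgroup H, N.Normal ∧ IsOpen (N : Set H) ∧ (N : Set H) ⊆ U)
    {p : ℕ} (hp : p.Prime) :
    IsOpen ((Subgroup.closure {x : H | ∃ w : H, w ^ p = x}).topologicalClosure : Set H) := by
  set S₁ : Subgroup H := Subgroup.closure {x : H | ∃ w : H, w ^ p = x} with hS₁
  set W₁ : Subgroup H := S₁.topologicalClosure with hW₁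
  have hSW : S₁ ≤ W₁ := Subgroup.le_topologicalClosure _
  have hW₁closed : IsClosed (W₁ : Set H) := Subgroup.isClosed_topologicalClosure _
  -- the index of W₁ ⊔ V divides p
  have hidx : ∀ V : Subgroup H, V.Normal → IsOpen (V : Set H) → (W₁ ⊔ V).index ∣ p := by
    intro V hVn hVo
    haveI := hVn
    haveI : Finite (H ⧸ V) := V.quotient_finite_of_isOpen hVo
    haveI : IsCyclic (H ⧸ V) := hcyc V hVn hVo
    obtain ⟨g₀, hg₀⟩ := IsCyclic.exists_generator (α := H ⧸ V)
    set q := QuotientGroup.mk' V with hq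
    have hker : q.ker ≤ W₁ ⊔ V := by
      rw [hq, QuotientGroup.ker_mk']
      exact le_sup_right
    have hidx1 : (Subgroup.map q (W₁ ⊔ V)).index = (W₁ ⊔ V).index :=
      Subgroup.index_map_eq _ (QuotientGroup.mk'_surjective V) hker
    obtain ⟨w, hw⟩ := QuotientGroup.mk'_surjective V g₀
    have hzle : Subgroup.zpowers (g₀ ^ p) ≤ Subgroup.map q (W₁ ⊔ V) := by
      rw [Subgroup.zpowers_le]
      refine Subgroup.mem_map.mpr ⟨w ^ p, ?_, by rw [map_pow, hw]⟩
      exact (le_sup_left : W₁ ≤ W₁ ⊔ V) (hSW (Subgroup.subset_closure ⟨w, rfl⟩))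
    have h2 : (Subgroup.map q (W₁ ⊔ V)).index ∣ (Subgroup.zpowers (g₀ ^ p)).index :=
      Subgroup.index_dvd_of_le hzle
    rw [← hidx1]
    exact h2.trans (index_zpowers_pow_dvd hg₀ p)
  -- intersection property
  have hinter : ∀ x : H, (∀ V : Subgroup H, V.Normal → IsOpen (V : Set H) → x ∈ W₁ ⊔ V) →
      x ∈ W₁ := by
    intro x hx
    have : x ∈ closure (W₁ : Set H) := by
      rw [mem_closure_iff]
      intro O hOopen hxO
      have h1 : (1 : H) ∈ (fun y => x * y) ⁻¹' O := by simpa using hxO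
      have hnhds : ((fun y => x * y) ⁻¹' O) ∈ nhds (1 : H) :=
        ((hOopen.preimage (continuous_mul_left x)).mem_nhds h1)
      obtain ⟨V, hVn, hVo, hVsub⟩ := exON hnhds
      obtain ⟨s, hs, t, ht, rfl⟩ := mem_sup_of_commute
        (fun a _ b _ => hcomm a b) (hx V hVn hVo)
      have h3 : s * t * t⁻¹ ∈ O := hVsub (V.inv_mem ht)
      exact ⟨s, by simpa using h3, hs⟩
    rwa [hW₁closed.closure_eq] at this
  -- dichotomy
  by_cases hall : ∀ V : Subgroup H, V.Normal → IsOpen (V : Set H) → W₁ ⊔ V = ⊤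
  · have htop : W₁ = ⊤ := by
      rw [eq_top_iff]
      intro x _
      refine hinter x (fun V hVn hVo => ?_)
      rw [hall V hVn hVo]
      exact Subgroup.mem_top x
    rw [htop, Subgroup.coe_top]
    exact isOpen_univ
  · push_neg at hall
    obtain ⟨V₀, hV₀n, hV₀o, hV₀ne⟩ := hall
    have hV₀idx : (W₁ ⊔ V₀).index = p := by
      rcases (Nat.Prime.eq_one_or_self_of_dvd hp _ (hidx V₀ hV₀n hV₀o)) with h | h
      · exact absurd (Subgroup.index_eq_one.mp h) hV₀ne
      · exact h
    have hkey : ∀ V : Subgroup H, V.Normal → IsOpen (V : Set H) → W₁ ⊔ V₀ ≤ W₁ ⊔ V := by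
      intro V hVn hVo
      have hVV₀n : (V ⊓ V₀).Normal := by
        constructor
        intro x hxm g
        have h' := Subgroup.mem_inf.mp hxm
        exact Subgroup.mem_inf.mpr ⟨hVn.conj_mem x h'.1 g, hV₀n.conj_mem x h'.2 g⟩
      have hVV₀o : IsOpen ((V ⊓ V₀ : Subgroup H) : Set H) := by
        rw [Subgroup.coe_inf]
        exact hVo.inter hV₀o
      have hle1 : W₁ ⊔ (V ⊓ V₀) ≤ W₁ ⊔ V₀ := sup_le_sup_left inf_le_right _
      have hle2 : W₁ ⊔ (V ⊓ V₀) ≤ W₁ ⊔ V := sup_le_sup_left inf_le_left _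
      have hne : W₁ ⊔ (V ⊓ V₀) ≠ ⊤ := by
        intro h
        exact hV₀ne (top_le_iff.mp (h ▸ hle1))
      have hidx2 : (W₁ ⊔ (V ⊓ V₀)).index = p := by
        rcases (Nat.Prime.eq_one_or_self_of_dvd hp _ (hidx _ hVV₀n hVV₀o)) with h | h
        · exact absurd (Subgroup.index_eq_one.mp h) hne
        · exact h
      have heq : W₁ ⊔ (V ⊓ V₀) = W₁ ⊔ V₀ := by
        have hrel := Subgroup.relIndex_mul_index hle1
        rw [hidx2, hV₀idx] at hrel
        have hmul : (W₁ ⊔ (V ⊓ V₀)).relIndex (W₁ ⊔ V₀) * p = 1 * p := by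
          rw [hrel, one_mul]
        have h1 := Nat.eq_of_mul_eq_mul_right hp.pos hmul
        exact le_antisymm hle1 (Subgroup.relIndex_eq_one.mp h1)
      rw [← heq]
      exact hle2
    have hW₁eq : W₁ = W₁ ⊔ V₀ := by
      refine le_antisymm le_sup_left ?_
      intro x hx
      exact hinter x (fun V hVn hVo => hkey V hVn hVo hx)
    have : IsOpen ((W₁ ⊔ V₀ : Subgroup H) : Set H) :=
      Subgroup.isOpen_mono le_sup_right hV₀o
    rw [hW₁eq]
    exact this



theorem isCyclic_quotient' [CompactSpace G] [T2Space G] [TotallyDisconnectedSpace G]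
    (Z W : Subgroup G) (hZ : IsProcyclicSubgroup Z) (hWZ : W ≤ Z)
    (V : Subgroup ↥W) (hVn : V.Normal) (hVo : IsOpen (V : Set ↥W)) :
    letI := hVn; IsCyclic (↥W ⧸ V) := by
  letI := hVn
  obtain ⟨O, hOopen, hOV⟩ := isOpen_induced_iff.mp hVo
  have h1O : (1 : G) ∈ O := by
    have h0 : ((1 : ↥W) : G) ∈ O := by
      rw [← Set.mem_preimage, hOV]; exact V.one_mem
    simpa using h0
  obtain ⟨N, hNn, hNo, hNsub⟩ := exists_openNormal (hOopen.mem_nhds h1O)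
  haveI : (N.subgroupOf W).Normal := hNn.comap W.subtype
  have hle : N.subgroupOf W ≤ V := by
    intro x hxm
    have h1 : (x : G) ∈ O := hNsub (Subgroup.mem_subgroupOf.mp hxm)
    have h2 : x ∈ (Subtype.val ⁻¹' O : Set ↥W) := h1
    rw [hOV] at h2
    exact h2
  haveI hc := isCyclic_quotient Z W hZ hWZ N hNn hNo
  have hsurj : Function.Surjective
      (QuotientGroup.map (N.subgroupOf W) V (MonoidHom.id _) (by simpa using hle)) := by
    intro y
    obtain ⟨x, rfl⟩ := QuotientGroup.mk'_surjective V y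
    exact ⟨QuotientGroup.mk x, by rw [QuotientGroup.map_mk]; rfl⟩
  exact isCyclic_of_surjective _ hsurj

theorem centralizes_W [CompactSpace G] [T2Space G] [TotallyDisconnectedSpace G]
    {p : ℕ} (hp : p.Prime)
    (P A Wg : Subgroup G) (hPclosed : IsClosed (P : Set G)) (hAclosed : IsClosed (A : Set G))
    (hPp : primesOf ↥P ⊆ {p}) (hAp' : p ∉ primesOf ↥A)
    (hWP : Wg ≤ P) (hWclosed : IsClosed (Wg : Set G))
    (hWcomm : ∀ x ∈ Wg, ∀ y ∈ Wg, x * y = y * x)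
    {b : G} (hbA : b ∈ A)
    (hbnorm : ∀ m : ℕ, ∀ w ∈ Wg, b ^ m * w * (b ^ m)⁻¹ ∈ Wg)
    (hb1 : ∀ w : ↥Wg, ∃ h : b * w * b⁻¹ * (w : G)⁻¹ ∈ Wg,
      (⟨b * w * b⁻¹ * (w : G)⁻¹, h⟩ : ↥Wg) ∈
        (Subgroup.closure {x : ↥Wg | ∃ z : ↥Wg, z ^ p = x}).topologicalClosure) :
    ∀ w ∈ Wg, b * w = w * b := by
  haveI : CompactSpace ↥Wg := isCompact_iff_compactSpace.mp hWclosed.isCompact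
  have hbnorm1 : ∀ w ∈ Wg, b * w * b⁻¹ ∈ Wg := by
    intro w hw
    have := hbnorm 1 w hw
    simpa using this
  -- the conjugation homomorphism on Wg
  set φ : ↥Wg →* ↥Wg :=
    { toFun := fun x => ⟨b * x * b⁻¹, hbnorm1 x x.2⟩
      map_one' := Subtype.ext (by simp)
      map_mul' := fun x y => Subtype.ext (by
        show b * ((x : G) * y) * b⁻¹ = (b * x * b⁻¹) * (b * y * b⁻¹)
        group) } with hφ
  intro w hw
  have hkey : ∀ N₀ : Subgroup G, N₀.Normal → IsOpen (N₀ : Set G) →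
      b * w * b⁻¹ * w⁻¹ ∈ N₀ := by
    intro N₀ hN₀n hN₀o
    haveI hVn : (N₀.subgroupOf Wg).Normal := hN₀n.comap Wg.subtype
    set V : Subgroup ↥Wg := N₀.subgroupOf Wg with hV
    have hVo : IsOpen (V : Set ↥Wg) := by
      rw [hV, Subgroup.coe_subgroupOf]
      exact hN₀o.preimage continuous_subtype_val
    letI cgX : CommGroup (↥Wg ⧸ V) :=
      { (inferInstance : Group (↥Wg ⧸ V)) with
        mul_comm := by
          intro a c
          refine QuotientGroup.induction_on a (fun x => ?_)
          refine QuotientGroup.induction_on c (fun y => ?_)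
          show QuotientGroup.mk (x * y) = QuotientGroup.mk (y * x)
          congr 1
          exact Subtype.ext (hWcomm x x.2 y y.2) }
    have hφV : V ≤ V.comap φ := by
      intro x hx
      show φ x ∈ V
      rw [hV, Subgroup.mem_subgroupOf]
      exact hN₀n.conj_mem _ (Subgroup.mem_subgroupOf.mp hx) b
    set σ : (↥Wg ⧸ V) →* (↥Wg ⧸ V) := QuotientGroup.map V V φ hφV with hσ
    -- iterates of σ
    have hiter : ∀ (m : ℕ) (x : ↥Wg), (⇑σ)^[m] (QuotientGroup.mk x) =
        QuotientGroup.mk (⟨b ^ m * (x : G) * (b ^ m)⁻¹, hbnorm m x x.2⟩ : ↥Wg) := by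
      intro m
      induction m with
      | zero =>
        intro x
        have h0 : (⟨b ^ 0 * (x : G) * (b ^ 0)⁻¹, hbnorm 0 x x.2⟩ : ↥Wg) = x :=
          Subtype.ext (by simp)
        rw [h0]
        rfl
      | succ m ih =>
        intro x
        rw [Function.iterate_succ_apply', ih, hσ, QuotientGroup.map_mk]
        congr 1
        refine Subtype.ext ?_
        show b * (b ^ m * (x : G) * (b ^ m)⁻¹) * b⁻¹ = b ^ (m + 1) * (x : G) * (b ^ (m + 1))⁻¹
        rw [pow_succ']
        group
    -- σ^[s] = id
    obtain ⟨hsne, hpowA, hsprimes⟩ := pow_index_helper A hAclosed N₀ hN₀n hN₀o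
    set s := (N₀.subgroupOf A).index with hs
    have hps : ¬ p ∣ s := fun h => hAp' (hsprimes p hp h)
    have hbs : b ^ s ∈ N₀ := hpowA b hbA
    have hσs : ∀ x : ↥Wg ⧸ V, (⇑σ)^[s] x = x := by
      intro x
      refine QuotientGroup.induction_on x (fun y => ?_)
      rw [hiter s y]
      rw [QuotientGroup.eq]
      rw [hV, Subgroup.mem_subgroupOf]
      simp only [Subgroup.coe_mul, Subgroup.coe_inv]
      have heq : (b ^ s * (y : G) * (b ^ s)⁻¹)⁻¹ * (y : G) =
          b ^ s * ((y : G)⁻¹ * (b ^ s)⁻¹ * (y : G)) := by group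
      rw [heq]
      refine N₀.mul_mem hbs ?_
      have hc2 := hN₀n.conj_mem _ (N₀.inv_mem hbs) (y : G)⁻¹
      simpa using hc2
    -- σ x = x * z^p
    have hσ1 : ∀ x : ↥Wg ⧸ V, ∃ z : ↥Wg ⧸ V, σ x = x * z ^ p := by
      intro x
      refine QuotientGroup.induction_on x (fun y => ?_)
      obtain ⟨hmem, hW₁⟩ := hb1 y
      set δ : ↥Wg := ⟨b * y * b⁻¹ * (y : G)⁻¹, hmem⟩ with hδ
      have hφy : φ y = δ * y := Subtype.ext (by
        show b * (y : G) * b⁻¹ = b * y * b⁻¹ * (y : G)⁻¹ * y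
        group)
      -- mk δ is a p-th power
      have hδpow : ∃ z : ↥Wg ⧸ V, z ^ p = QuotientGroup.mk δ := by
        have hδcl : (δ : ↥Wg) ∈
            closure ((Subgroup.closure {x : ↥Wg | ∃ z : ↥Wg, z ^ p = x} : Subgroup ↥Wg) :
              Set ↥Wg) := by
          rw [← Subgroup.topologicalClosure_coe]
          exact hW₁
        have hOop : IsOpen {u : ↥Wg | δ⁻¹ * u ∈ V} :=
          (hVo.preimage (continuous_mul_left δ⁻¹))
        have hδO : δ ∈ {u : ↥Wg | δ⁻¹ * u ∈ V} := by
          show δ⁻¹ * δ ∈ V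
          rw [inv_mul_cancel]
          exact V.one_mem
        obtain ⟨y', hy'O, hy'S⟩ := mem_closure_iff.mp hδcl _ hOop hδO
        have hmkeq : (QuotientGroup.mk δ : ↥Wg ⧸ V) = QuotientGroup.mk y' :=
          QuotientGroup.eq.mpr hy'O
        have hy'mem : (QuotientGroup.mk y' : ↥Wg ⧸ V) ∈
            (powMonoidHom p : (↥Wg ⧸ V) →* (↥Wg ⧸ V)).range := by
          refine Subgroup.closure_induction ?_ ?_ ?_ ?_ hy'S
          · rintro u ⟨z, rfl⟩
            exact ⟨QuotientGroup.mk z, by simp [powMonoidHom_apply, ← QuotientGroup.mk_pow]⟩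
          · exact Subgroup.one_mem _
          · intro u v _ _ hu hv
            rw [QuotientGroup.mk_mul]
            exact Subgroup.mul_mem _ hu hv
          · intro u _ hu
            rw [QuotientGroup.mk_inv]
            exact Subgroup.inv_mem _ hu
        obtain ⟨z, hz⟩ := hy'mem
        exact ⟨z, by rw [← hmkeq] at hz; exact hz⟩
      obtain ⟨z, hz⟩ := hδpow
      refine ⟨z, ?_⟩
      rw [hσ, QuotientGroup.map_mk, hφy, QuotientGroup.mk_mul, hz]
      exact mul_comm _ _
    -- cardinality
    obtain ⟨htne, _, htprimes⟩ := pow_index_helper Wg hWclosed N₀ hN₀n hN₀o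
    set t := (N₀.subgroupOf Wg).index with ht
    have hqp : ∀ q : ℕ, q.Prime → q ∣ t → q = p := by
      intro q hq hqd
      have h1 : q ∈ primesOf ↥Wg := htprimes q hq hqd
      have h2 : q ∈ primesOf ↥P := primesOf_mono hWP hPclosed h1
      exact hPp h2
    have hcard : Nat.card (↥Wg ⧸ V) ∣ p ^ t := by
      have h1 : Nat.card (↥Wg ⧸ V) = t := rfl
      rw [h1]
      exact nat_dvd_pow_of_primes hp t htne hqp
    -- apply the key finite lemma
    have hfix := fin_lemma hp hps t (↥Wg ⧸ V) σ hcard hσs hσ1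
    have h3 := hfix (QuotientGroup.mk (⟨w, hw⟩ : ↥Wg))
    rw [hσ, QuotientGroup.map_mk] at h3
    have h4 : (φ ⟨w, hw⟩)⁻¹ * (⟨w, hw⟩ : ↥Wg) ∈ V := QuotientGroup.eq.mp h3
    rw [hV, Subgroup.mem_subgroupOf] at h4
    have h5 : (b * w * b⁻¹)⁻¹ * w ∈ N₀ := h4
    have h6 : ((b * w * b⁻¹)⁻¹ * w)⁻¹ ∈ N₀ := N₀.inv_mem h5
    have h7 : w * (((b * w * b⁻¹)⁻¹ * w)⁻¹) * w⁻¹ ∈ N₀ := hN₀n.conj_mem _ h6 w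
    have h8 : w * (((b * w * b⁻¹)⁻¹ * w)⁻¹) * w⁻¹ = b * w * b⁻¹ * w⁻¹ := by group
    rwa [h8] at h7
  have h9 : b * w * b⁻¹ * w⁻¹ = 1 := by
    apply eq_one_of_forall_mem
    intro N hn ho
    exact hkey N hn ho
  calc b * w = (b * w * b⁻¹ * w⁻¹) * (w * b) := by group
    _ = w * b := by rw [h9]; group


theorem procyclic_comap_conj (Z : Subgroup G) (hZ : IsProcyclicSubgroup Z) (g : G) :
    IsProcyclicSubgroup (Z.comap (MulAut.conj g).toMonoidHom) := by
  obtain ⟨z, hzZ, hgen⟩ := hZ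
  refine ⟨g⁻¹ * z * g, ?_, ?_⟩
  · show (MulAut.conj g).toMonoidHom (g⁻¹ * z * g) ∈ Z
    have h1 : (MulAut.conj g).toMonoidHom (g⁻¹ * z * g) = z := by
      simp [MulAut.conj_apply]
      group
    rw [h1]; exact hzZ
  · set e : G ≃ₜ G := (Homeomorph.mulLeft g⁻¹).trans (Homeomorph.mulRight g) with he
    have heapp : ∀ x : G, e x = g⁻¹ * x * g := fun x => rfl
    have himg1 : e '' ((Subgroup.zpowers z : Subgroup G) : Set G) =
        ((Subgroup.zpowers (g⁻¹ * z * g) : Subgroup G) : Set G) := by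
      ext u
      constructor
      · rintro ⟨x, hx, rfl⟩
        obtain ⟨k, rfl⟩ := Subgroup.mem_zpowers_iff.mp hx
        refine Subgroup.mem_zpowers_iff.mpr ⟨k, ?_⟩
        rw [heapp]
        rw [show g⁻¹ * z * g = g⁻¹ * z * (g⁻¹)⁻¹ by rw [inv_inv], conj_zpow, inv_inv]
      · intro hu
        obtain ⟨k, rfl⟩ := Subgroup.mem_zpowers_iff.mp hu
        refine ⟨z ^ k, Subgroup.mem_zpowers_iff.mpr ⟨k, rfl⟩, ?_⟩
        rw [heapp]
        rw [show g⁻¹ * z * g = g⁻¹ * z * (g⁻¹)⁻¹ by rw [inv_inv], conj_zpow, inv_inv]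
    have himg2 : e '' (Z : Set G) =
        ((Z.comap (MulAut.conj g).toMonoidHom : Subgroup G) : Set G) := by
      ext u
      constructor
      · rintro ⟨x, hx, rfl⟩
        show (MulAut.conj g) (e x) ∈ Z
        have : (MulAut.conj g) (e x) = x := by
          rw [heapp, MulAut.conj_apply]
          group
        rw [this]; exact hx
      · intro hu
        have hu' : g * u * g⁻¹ ∈ Z := hu
        refine ⟨g * u * g⁻¹, hu', ?_⟩
        rw [heapp]
        group
    calc closure ((Subgroup.zpowers (g⁻¹ * z * g) : Subgroup G) : Set G)
        = closure (e '' ((Subgroup.zpowers z : Subgroup G) : Set G)) := by rw [himg1]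
      _ = e '' closure ((Subgroup.zpowers z : Subgroup G) : Set G) := (e.image_closure _).symm
      _ = e '' (Z : Set G) := by rw [hgen]
      _ = _ := himg2

end CFIC

/-- Let `G` be a profinite group whose set of coprime commutators is contained in a union
of countably many procyclic closed subgroups. Suppose `G = PA`, where `P` is a closed
normal pro-`p` subgroup and `A` is a closed pronilpotent pro-`p'` subgroup. Then the index
`[A : C_A(P)]` is finite. -/
theorem centralizer_finite_index_in_complement
    {G : Type*} [Group G] [TopologicalSpace G] [IsTopologicalGroup G]
    [CompactSpace G] [T2Space G] [TotallyDisconnectedSpace G]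
    {p : ℕ} (hp : p.Prime)
    (C : ℕ → Subgroup G)
    (hCclosed : ∀ i, IsClosed (C i : Set G))
    (hCproc : ∀ i, IsProcyclicSubgroup (C i))
    (hcov : ∀ g : G, IsCoprimeCommutator g → g ∈ ⋃ i, (C i : Set G))
    (P A : Subgroup G)
    (hPclosed : IsClosed (P : Set G)) (hAclosed : IsClosed (A : Set G))
    (hPnormal : P.Normal)
    (hPp : primesOf ↥P ⊆ {p})
    (hApronil : IsPronilpotent ↥A) (hAp' : p ∉ primesOf ↥A)
    (hprod : ∀ g : G, ∃ u ∈ P, ∃ a ∈ A, g = u * a) :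
    (Subgroup.centralizer (P : Set G)).relIndex A ≠ 0 := by
  classical
  haveI : CompactSpace ↥P := isCompact_iff_compactSpace.mp hPclosed.isCompact
  haveI : CompactSpace ↥A := isCompact_iff_compactSpace.mp hAclosed.isCompact
  -- every ⁅u, a⁆ with u ∈ P, a ∈ A is a coprime commutator
  have hXcop : ∀ u ∈ P, ∀ a ∈ A, IsCoprimeCommutator ⁅u, a⁆ := by
    intro u hu a ha
    refine ⟨u, a, ?_, rfl⟩
    have h1 : closedGen u ≤ P :=
      Subgroup.topologicalClosure_minimal _ (Subgroup.zpowers_le.mpr hu) hPclosed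
    have h2 : closedGen a ≤ A :=
      Subgroup.topologicalClosure_minimal _ (Subgroup.zpowers_le.mpr ha) hAclosed
    have hc1 : primesOf ↥(closedGen u) ⊆ {p} :=
      (CFIC.primesOf_mono h1 hPclosed).trans hPp
    have hc2 : primesOf ↥(closedGen a) ⊆ primesOf ↥A := CFIC.primesOf_mono h2 hAclosed
    unfold CoprimeOrders
    rw [Set.eq_empty_iff_forall_notMem]
    rintro q ⟨hq1, hq2⟩
    have hqp : q = p := hc1 hq1
    exact hAp' (hqp ▸ hc2 hq2)
  -- the compact set of commutators
  set f : ↥P × ↥A → G := fun q => (q.1 : G) * (q.2 : G) * (q.1 : G)⁻¹ * (q.2 : G)⁻¹ with hf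
  have hc1 : Continuous (fun q : ↥P × ↥A => (q.1 : G)) :=
    continuous_subtype_val.comp continuous_fst
  have hc2 : Continuous (fun q : ↥P × ↥A => (q.2 : G)) :=
    continuous_subtype_val.comp continuous_snd
  have hfc : Continuous f := ((hc1.mul hc2).mul hc1.inv).mul hc2.inv
  set Xset : Set G := Set.range f with hX
  have hXcomp : IsCompact Xset := isCompact_range hfc
  have hXne : Xset.Nonempty := ⟨f (1, 1), ⟨(1, 1), rfl⟩⟩
  haveI : CompactSpace ↥Xset := isCompact_iff_compactSpace.mp hXcomp
  haveI : Nonempty ↥Xset := hXne.to_subtype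
  -- Baire category
  have hcover : (⋃ i, (Subtype.val ⁻¹' (C i : Set G) : Set ↥Xset)) = Set.univ := by
    ext x
    simp only [Set.mem_iUnion, Set.mem_univ, iff_true, Set.mem_preimage]
    obtain ⟨⟨⟨u, hu⟩, ⟨a, ha⟩⟩, hxeq⟩ := x.2
    have hxc : IsCoprimeCommutator (x : G) := by
      rw [← hxeq]
      exact hXcop u hu a ha
    have hx2 := hcov _ hxc
    rw [Set.mem_iUnion] at hx2
    exact hx2
  obtain ⟨i, hi⟩ := nonempty_interior_of_iUnion_of_closed
    (fun i => (hCclosed i).preimage continuous_subtype_val) hcover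
  obtain ⟨x0s, hx0⟩ := hi
  obtain ⟨x0, hx0X⟩ := x0s
  have hnhd : (Subtype.val ⁻¹' (C i : Set G) : Set ↥Xset) ∈ nhds (⟨x0, hx0X⟩ : ↥Xset) :=
    mem_interior_iff_mem_nhds.mp hx0
  rw [nhds_subtype_eq_comap] at hnhd
  obtain ⟨t, htn, hts⟩ := Filter.mem_comap.mp hnhd
  obtain ⟨O, hOt, hOopen, hx0O⟩ := mem_nhds_iff.mp htn
  have hOC : ∀ y, y ∈ Xset → y ∈ O → y ∈ C i := by
    intro y hy hyO
    exact hts (show ((⟨y, hy⟩ : ↥Xset) : G) ∈ t from hOt hyO)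
  obtain ⟨⟨⟨u0, hu0⟩, ⟨a0, ha0⟩⟩, hfx0⟩ := hx0X
  -- continuity of the commutator map at (u0, a0)
  set gcm : G × G → G := fun q => q.1 * q.2 * q.1⁻¹ * q.2⁻¹ with hgcm
  have hgc : Continuous gcm :=
    ((continuous_fst.mul continuous_snd).mul continuous_fst.inv).mul continuous_snd.inv
  have hpre : (u0, a0) ∈ gcm ⁻¹' O := by
    show gcm (u0, a0) ∈ O
    have : gcm (u0, a0) = x0 := hfx0
    rw [this]
    exact hx0O
  obtain ⟨V1, V2, hV1o, hV2o, hu0V1, ha0V2, hV12⟩ :=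
    isOpen_prod_iff.mp (hOopen.preimage hgc) u0 a0 hpre
  have hU1o : IsOpen ((fun h : G => u0 * h) ⁻¹' V1) := hV1o.preimage (continuous_mul_left u0)
  have hU2o : IsOpen ((fun h : G => a0 * h) ⁻¹' V2) := hV2o.preimage (continuous_mul_left a0)
  have hUnhds : ((fun h : G => u0 * h) ⁻¹' V1) ∩ ((fun h : G => a0 * h) ⁻¹' V2) ∈
      nhds (1 : G) := by
    refine (hU1o.inter hU2o).mem_nhds ⟨?_, ?_⟩
    · show u0 * 1 ∈ V1
      rwa [mul_one]
    · show a0 * 1 ∈ V2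
      rwa [mul_one]
  obtain ⟨N, hNn, hNo, hNsub⟩ := CFIC.exists_openNormal hUnhds
  set K : Subgroup G := N ⊓ P with hK
  set B : Subgroup G := N ⊓ A with hB
  set Z : Subgroup G := C i with hZ
  have hZmem : ∀ v ∈ K, ∀ c ∈ B, gcm (u0 * v, a0 * c) ∈ Z := by
    intro v hv c hc
    have hvN : v ∈ N := (Subgroup.mem_inf.mp hv).1
    have hvP : v ∈ P := (Subgroup.mem_inf.mp hv).2
    have hcN : c ∈ N := (Subgroup.mem_inf.mp hc).1
    have hcA : c ∈ A := (Subgroup.mem_inf.mp hc).2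
    have hin1 : u0 * v ∈ V1 := (hNsub hvN).1
    have hin2 : a0 * c ∈ V2 := (hNsub hcN).2
    have hmemX : gcm (u0 * v, a0 * c) ∈ Xset :=
      ⟨(⟨u0 * v, P.mul_mem hu0 hvP⟩, ⟨a0 * c, A.mul_mem ha0 hcA⟩), rfl⟩
    have hmemO : gcm (u0 * v, a0 * c) ∈ O := hV12 ⟨hin1, hin2⟩
    exact hOC _ hmemX hmemO
  -- conjugation tricks
  have h2 : ∀ v ∈ K, ∀ c ∈ B, a0 * gcm (u0 * v, c) * a0⁻¹ ∈ Z := by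
    intro v hv c hc
    have hid : a0 * gcm (u0 * v, c) * a0⁻¹ =
        (gcm (u0 * v, a0 * 1))⁻¹ * gcm (u0 * v, a0 * c) := by
      show a0 * ((u0*v) * c * (u0*v)⁻¹ * c⁻¹) * a0⁻¹ =
        ((u0*v) * (a0*1) * (u0*v)⁻¹ * (a0*1)⁻¹)⁻¹ * ((u0*v) * (a0*c) * (u0*v)⁻¹ * (a0*c)⁻¹)
      group
    rw [hid]
    exact Z.mul_mem (Z.inv_mem (hZmem v hv 1 B.one_mem)) (hZmem v hv c hc)
  have h3 : ∀ w ∈ K, ∀ c ∈ B, (a0 * u0) * gcm (w, c) * (a0 * u0)⁻¹ ∈ Z := by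
    intro w hw c hc
    have hid : (a0 * u0) * gcm (w, c) * (a0 * u0)⁻¹ =
        (a0 * gcm (u0 * w, c) * a0⁻¹) * (a0 * gcm (u0 * 1, c) * a0⁻¹)⁻¹ := by
      show (a0 * u0) * (w * c * w⁻¹ * c⁻¹) * (a0 * u0)⁻¹ =
        (a0 * ((u0*w) * c * (u0*w)⁻¹ * c⁻¹) * a0⁻¹) *
          (a0 * ((u0*1) * c * (u0*1)⁻¹ * c⁻¹) * a0⁻¹)⁻¹
      group
    rw [hid]
    exact Z.mul_mem (h2 w hw c hc) (Z.inv_mem (h2 1 K.one_mem c hc))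
  set g0 : G := a0 * u0 with hg0
  set Z2 : Subgroup G := Z.comap (MulAut.conj g0).toMonoidHom with hZ2
  have hZ2closed : IsClosed (Z2 : Set G) := by
    have hcont : Continuous fun x : G => g0 * x * g0⁻¹ :=
      (continuous_const.mul continuous_id).mul continuous_const
    have : (Z2 : Set G) = (fun x : G => g0 * x * g0⁻¹) ⁻¹' (Z : Set G) := by
      rw [hZ2, Subgroup.coe_comap]
      rfl
    rw [this]
    exact (hCclosed i).preimage hcont
  -- the closed commutator subgroup W
  set Scomm : Set G := {z : G | ∃ s ∈ (K : Set G), ∃ t ∈ (B : Set G), z = ⁅s, t⁆} with hScomm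
  set Wg : Subgroup G := commClosure (K : Set G) (B : Set G) with hWg
  have hWgdef : Wg = (Subgroup.closure Scomm).topologicalClosure := rfl
  have hSZ2 : Scomm ⊆ (Z2 : Set G) := by
    rintro z ⟨s, hs, t, ht, rfl⟩
    show (MulAut.conj g0).toMonoidHom ⁅s, t⁆ ∈ Z
    have : (MulAut.conj g0).toMonoidHom ⁅s, t⁆ = g0 * gcm (s, t) * g0⁻¹ := rfl
    rw [this, hg0]
    exact h3 s hs t ht
  have hSP : Scomm ⊆ (P : Set G) := by
    rintro z ⟨s, hs, t, ht, rfl⟩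
    have hsP : s ∈ P := (Subgroup.mem_inf.mp hs).2
    have hconj : t * s⁻¹ * t⁻¹ ∈ P := hPnormal.conj_mem _ (P.inv_mem hsP) t
    have : ⁅s, t⁆ = s * (t * s⁻¹ * t⁻¹) := by
      show s * t * s⁻¹ * t⁻¹ = _
      group
    rw [this]
    exact P.mul_mem hsP hconj
  have hWgZ2 : Wg ≤ Z2 :=
    Subgroup.topologicalClosure_minimal _ ((Subgroup.closure_le _).mpr hSZ2) hZ2closed
  have hWgP : Wg ≤ P :=
    Subgroup.topologicalClosure_minimal _ ((Subgroup.closure_le _).mpr hSP) hPclosed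
  have hWgclosed : IsClosed (Wg : Set G) := Subgroup.isClosed_topologicalClosure _
  have hZ2proc : IsProcyclicSubgroup Z2 := CFIC.procyclic_comap_conj Z (hCproc i) g0
  have hWgcomm : ∀ x ∈ Wg, ∀ y ∈ Wg, x * y = y * x := fun x hx y hy =>
    CFIC.procyclic_comm hZ2proc x (hWgZ2 hx) y (hWgZ2 hy)
  have hKn : K.Normal := by
    constructor
    intro x hx g
    exact Subgroup.mem_inf.mpr ⟨hNn.conj_mem _ (Subgroup.mem_inf.mp hx).1 g,
      hPnormal.conj_mem _ (Subgroup.mem_inf.mp hx).2 g⟩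
  -- B normalizes Wg
  have hWnormb : ∀ b ∈ B, ∀ w ∈ Wg, b * w * b⁻¹ ∈ Wg := by
    intro b hb w hw
    have hScl : (fun x : G => b * x * b⁻¹) '' Scomm ⊆ Scomm := by
      rintro z ⟨z', ⟨s, hs, c, hc, rfl⟩, rfl⟩
      refine ⟨b * s * b⁻¹, hKn.conj_mem s hs b, b * c * b⁻¹, ?_, ?_⟩
      · exact (Subgroup.mem_inf.mpr ⟨hNn.conj_mem _ (Subgroup.mem_inf.mp hc).1 b,
          A.mul_mem (A.mul_mem (Subgroup.mem_inf.mp hb).2 (Subgroup.mem_inf.mp hc).2)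
            (A.inv_mem (Subgroup.mem_inf.mp hb).2)⟩)
      · show b * ⁅s, c⁆ * b⁻¹ = ⁅b * s * b⁻¹, b * c * b⁻¹⁆
        simp only [commutatorElement_def]
        group
    have hclS : ∀ x ∈ Subgroup.closure Scomm, b * x * b⁻¹ ∈ Subgroup.closure Scomm := by
      intro x hx
      refine Subgroup.closure_induction ?_ ?_ ?_ ?_ hx
      · intro y hy
        exact Subgroup.subset_closure (hScl ⟨y, hy, rfl⟩)
      · have : b * (1 : G) * b⁻¹ = 1 := by group
        rw [this]; exact Subgroup.one_mem _
      · intro x' y' _ _ hx' hy'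
        have : b * (x' * y') * b⁻¹ = (b * x' * b⁻¹) * (b * y' * b⁻¹) := by group
        rw [this]; exact Subgroup.mul_mem _ hx' hy'
      · intro x' _ hx'
        have : b * x'⁻¹ * b⁻¹ = (b * x' * b⁻¹)⁻¹ := by group
        rw [this]; exact Subgroup.inv_mem _ hx'
    have hcbc : Continuous fun x : G => b * x * b⁻¹ :=
      (continuous_const.mul continuous_id).mul continuous_const
    have hw' : w ∈ closure ((Subgroup.closure Scomm : Subgroup G) : Set G) := by
      rw [← Subgroup.topologicalClosure_coe]
      exact hw
    have himg : (fun x : G => b * x * b⁻¹) ''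
        ((Subgroup.closure Scomm : Subgroup G) : Set G) ⊆
        ((Subgroup.closure Scomm : Subgroup G) : Set G) := by
      rintro z ⟨x, hx, rfl⟩
      exact hclS x hx
    have h1 : b * w * b⁻¹ ∈ closure ((fun x : G => b * x * b⁻¹) ''
        ((Subgroup.closure Scomm : Subgroup G) : Set G)) :=
      image_closure_subset_closure_image hcbc ⟨w, hw', rfl⟩
    have h2' : b * w * b⁻¹ ∈ closure ((Subgroup.closure Scomm : Subgroup G) : Set G) :=
      closure_mono himg h1
    rw [← Subgroup.topologicalClosure_coe] at h2'
    exact h2'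
  -- openness of the p-th power closure in Wg
  haveI : CompactSpace ↥Wg := isCompact_iff_compactSpace.mp hWgclosed.isCompact
  have hcommW : ∀ a b : ↥Wg, a * b = b * a := fun a b =>
    Subtype.ext (hWgcomm a a.2 b b.2)
  have hcyc' : ∀ V : Subgroup ↥Wg, ∀ hVn : V.Normal, IsOpen (V : Set ↥Wg) →
      (letI := hVn; IsCyclic (↥Wg ⧸ V)) := fun V hVn hVo =>
    CFIC.isCyclic_quotient' Z2 Wg hZ2proc hWgZ2 V hVn hVo
  have hW₁o := CFIC.powClosure_isOpen hcommW hcyc'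
    (fun {U} hU => CFIC.exists_openNormal hU) hp
  obtain ⟨O₁, hO₁o, hO₁eq⟩ := isOpen_induced_iff.mp hW₁o
  -- tube lemma
  have h1O₁ : (1 : G) ∈ O₁ := by
    have hm : (1 : ↥Wg) ∈ (Subgroup.closure {x : ↥Wg | ∃ z : ↥Wg, z ^ p = x}).topologicalClosure :=
      Subgroup.one_mem _
    have : (1 : ↥Wg) ∈ (Subtype.val ⁻¹' O₁ : Set ↥Wg) := by
      rw [hO₁eq]
      exact hm
    simpa using this
  have hsubtube : (Wg : Set G) ×ˢ ({(1 : G)} : Set G) ⊆ gcm ⁻¹' O₁ := by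
    rintro ⟨x, y⟩ ⟨hx, hy⟩
    have hy1 : y = 1 := hy
    show gcm (x, y) ∈ O₁
    have : gcm (x, y) = 1 := by
      rw [hy1]
      show x * 1 * x⁻¹ * 1⁻¹ = 1
      group
    rw [this]
    exact h1O₁
  obtain ⟨u, v, huo, hvo, hWu, h1v, huv⟩ := generalized_tube_lemma hWgclosed.isCompact
    isCompact_singleton (hO₁o.preimage hgc) hsubtube
  obtain ⟨N₂, hN₂n, hN₂o, hN₂v⟩ := CFIC.exists_openNormal (hvo.mem_nhds (h1v rfl))
  -- the centralizing subgroup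
  have hMC : ∀ b, b ∈ A → b ∈ N ⊓ N₂ → b ∈ Subgroup.centralizer (P : Set G) := by
    intro b hbA hbM
    have hbN : b ∈ N := (Subgroup.mem_inf.mp hbM).1
    have hbN₂ : b ∈ N₂ := (Subgroup.mem_inf.mp hbM).2
    have hbB : b ∈ B := Subgroup.mem_inf.mpr ⟨hbN, hbA⟩
    -- the commutator condition
    have hb1 : ∀ w : ↥Wg, ∃ h : b * w * b⁻¹ * (w : G)⁻¹ ∈ Wg,
        (⟨b * w * b⁻¹ * (w : G)⁻¹, h⟩ : ↥Wg) ∈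
          (Subgroup.closure {x : ↥Wg | ∃ z : ↥Wg, z ^ p = x}).topologicalClosure := by
      intro w
      have hconj : b * (w : G)⁻¹ * b⁻¹ ∈ Wg := hWnormb b hbB _ (Wg.inv_mem w.2)
      have hwb : (w : G) * b * (w : G)⁻¹ * b⁻¹ ∈ Wg := by
        have hmm := Wg.mul_mem w.2 hconj
        have heq : (w : G) * (b * (w : G)⁻¹ * b⁻¹) = (w : G) * b * (w : G)⁻¹ * b⁻¹ := by
          group
        rwa [heq] at hmm
      have hwbO₁ : (w : G) * b * (w : G)⁻¹ * b⁻¹ ∈ O₁ := by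
        have := huv (Set.mk_mem_prod (hWu w.2) (hN₂v hbN₂))
        exact this
      have hmemW₁ : (⟨(w : G) * b * (w : G)⁻¹ * b⁻¹, hwb⟩ : ↥Wg) ∈
          (Subgroup.closure {x : ↥Wg | ∃ z : ↥Wg, z ^ p = x}).topologicalClosure := by
        have : (⟨(w : G) * b * (w : G)⁻¹ * b⁻¹, hwb⟩ : ↥Wg) ∈
            (Subtype.val ⁻¹' O₁ : Set ↥Wg) := hwbO₁
        rw [hO₁eq] at this
        exact this
      have hδmem : b * (w : G) * b⁻¹ * (w : G)⁻¹ ∈ Wg := by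
        have := Wg.inv_mem hwb
        have heq : ((w : G) * b * (w : G)⁻¹ * b⁻¹)⁻¹ = b * (w : G) * b⁻¹ * (w : G)⁻¹ := by
          group
        rwa [heq] at this
      refine ⟨hδmem, ?_⟩
      have hinv := Subgroup.inv_mem _ hmemW₁
      have heq2 : (⟨(w : G) * b * (w : G)⁻¹ * b⁻¹, hwb⟩ : ↥Wg)⁻¹ =
          (⟨b * (w : G) * b⁻¹ * (w : G)⁻¹, hδmem⟩ : ↥Wg) := by
        apply Subtype.ext
        show ((w : G) * b * (w : G)⁻¹ * b⁻¹)⁻¹ = b * (w : G) * b⁻¹ * (w : G)⁻¹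
        group
      rwa [heq2] at hinv
    have hcent1 : ∀ w ∈ Wg, b * w = w * b :=
      CFIC.centralizes_W hp P A Wg hPclosed hAclosed hPp hAp' hWgP hWgclosed hWgcomm hbA
        (fun m w hw => hWnormb (b ^ m) (B.pow_mem hbB m) w hw) hb1
    have hcent2 : ∀ x ∈ K, b * x = x * b := by
      refine CFIC.centralize_step hp P A hPclosed hAclosed hPp hAp' hbA K Wg hWgP
        (fun n hn => hcent1 n hn) ?_
      intro x hx
      exact Subgroup.le_topologicalClosure _ (Subgroup.subset_closure ⟨x, hx, b, hbB, rfl⟩)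
    have hcent3 : ∀ x ∈ P, b * x = x * b := by
      refine CFIC.centralize_step hp P A hPclosed hAclosed hPp hAp' hbA P K inf_le_right
        (fun n hn => hcent2 n hn) ?_
      intro x hx
      refine Subgroup.mem_inf.mpr ⟨?_, ?_⟩
      · show x * b * x⁻¹ * b⁻¹ ∈ N
        exact N.mul_mem (hNn.conj_mem b hbN x) (N.inv_mem hbN)
      · show x * b * x⁻¹ * b⁻¹ ∈ P
        have hcm : b * x⁻¹ * b⁻¹ ∈ P := hPnormal.conj_mem _ (P.inv_mem hx) b
        have heq : x * (b * x⁻¹ * b⁻¹) = x * b * x⁻¹ * b⁻¹ := by group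
        rw [← heq]
        exact P.mul_mem hx hcm
    exact Subgroup.mem_centralizer_iff.mpr (fun h hh => (hcent3 h hh).symm)
  -- conclude about the relative index
  have hMn : (N ⊓ N₂).Normal := by
    constructor
    intro x hx g
    exact Subgroup.mem_inf.mpr ⟨hNn.conj_mem _ (Subgroup.mem_inf.mp hx).1 g,
      hN₂n.conj_mem _ (Subgroup.mem_inf.mp hx).2 g⟩
  have hMo : IsOpen ((N ⊓ N₂ : Subgroup G) : Set G) := by
    rw [Subgroup.coe_inf]
    exact hNo.inter hN₂o
  haveI := hMn
  have hle : (N ⊓ N₂).subgroupOf A ≤ (Subgroup.centralizer (P : Set G)).subgroupOf A := by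
    intro x hx
    rw [Subgroup.mem_subgroupOf] at hx ⊢
    exact hMC (x : G) x.2 hx
  have hdvd1 : (Subgroup.centralizer (P : Set G)).relIndex A ∣ (N ⊓ N₂).relIndex A :=
    Subgroup.index_dvd_of_le hle
  have hrne : (N ⊓ N₂).relIndex A ≠ 0 := by
    intro h0
    have hd := Subgroup.relIndex_dvd_index_of_normal (N ⊓ N₂) A
    rw [h0] at hd
    exact CFIC.index_ne_zero_of_isOpen hMo (zero_dvd_iff.mp hd)
  intro h0
  rw [h0] at hdvd1
  exact hrne (zero_dvd_iff.mp hdvd1)
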